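/- Let K be a finite field, u a unit of K with u ≠ 1 and u ≠ −1. Then the u-trinomial minimal solution over K is irreducible if and only if for every integer l ≥ 1 one has u^{2l} + u^{l+1} − 1 ≠ 0 and u^{2l} − u^{l+1} − 1 ≠ 0. -/

import Mathlib

namespace Quiddity

variable {A : Type*} [CommRing A]

/-- `mMat [a₁, …, aₙ]` is the matrix product `[[aₙ,-1],[1,0]] ⋯ [[a₁,-1],[1,0]]`. -/
def mMat : List A → Matrix (Fin 2) (Fin 2) A
  | [] => 1
  | a :: t => mMat t * !![a, -1; 1, 0]

/-- Continuant: `cont [] = K₀ = 1`, `cont [a] = K₁(a) = a`, and the continuant recursion. -/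
def cont : List A → A
  | [] => 1
  | [a] => a
  | a :: b :: t => a * cont (b :: t) - cont t

/-- A λ-quiddity is a tuple with `Mₙ(a₁,…,aₙ) = ± Id`. -/
def IsQuiddity (l : List A) : Prop := mMat l = 1 ∨ mMat l = -1

/-- The sum `⊕` of two tuples (meaningful for tuples of length ≥ 2):
`(a₁,…,aₘ) ⊕ (b₁,…,b_l) = (a₁+b_l, a₂,…,a_{m−1}, aₘ+b₁, b₂,…,b_{l−1})`. -/
def oplus (la lb : List A) : List A :=
  (la.headD 0 + lb.getLastD 0) ::
    (la.tail.dropLast ++ (la.getLastD 0 + lb.headD 0) :: lb.tail.dropLast)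

/-- Two tuples are equivalent if one is a cyclic permutation of the other or of its
reversal. -/
def TupleEquiv (l l' : List A) : Prop :=
  List.IsRotated l l' ∨ List.IsRotated l.reverse l'

/-- A λ-quiddity `c` is reducible if `c ∼ a ⊕ b` with `b` a λ-quiddity and both of size ≥ 3. -/
def QuiddityReducible (c : List A) : Prop :=
  ∃ a b : List A, 3 ≤ a.length ∧ 3 ≤ b.length ∧ IsQuiddity b ∧ TupleEquiv c (oplus a b)

/-- `(a, b, a, b, …, a, b)` with `k` repetitions of the pair `(a, b)` (size `2k`). -/
def dynList : ℕ → A → A → List A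
  | 0, _, _ => []
  | k + 1, a, b => a :: b :: dynList k a b

/-- `(u, v, v, u, v, v, …, u, v, v)` with `k` repetitions of the block `(u, v, v)`
(size `3k`). -/
def triList : ℕ → A → A → List A
  | 0, _, _ => []
  | k + 1, a, b => a :: b :: b :: triList k a b

end Quiddity

open Quiddity

section Aux

set_option linter.unusedSectionVars false
set_option maxHeartbeats 1000000

variable {K : Type*} [Field K]

lemma mMat_nil : mMat ([] : List K) = 1 := rfl

lemma mMat_cons (a : K) (t : List K) : mMat (a :: t) = mMat t * !![a, -1; 1, 0] := rfl

lemma mMat_append (l1 l2 : List K) : mMat (l1 ++ l2) = mMat l2 * mMat l1 := by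
  induction l1 with
  | nil => simp [mMat_nil]
  | cons a t ih => simp [mMat_cons, ih, mul_assoc]

lemma mMat_singleton (a : K) : mMat [a] = !![a, -1; 1, 0] := by
  simp [mMat_cons, mMat_nil]

lemma det_mMat (l : List K) : (mMat l).det = 1 := by
  induction l with
  | nil => simp [mMat_nil]
  | cons a t ih => simp [mMat_cons, Matrix.det_mul, ih, Matrix.det_fin_two_of]

lemma triList_add (m n : ℕ) (a b : K) :
    triList (m + n) a b = triList m a b ++ triList n a b := by
  induction m with
  | zero => simp [triList]
  | succ m ih =>
      have h : m + 1 + n = (m + n) + 1 := by omega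
      rw [h]
      show a :: b :: b :: triList (m + n) a b = (a :: b :: b :: triList m a b) ++ triList n a b
      rw [ih]; simp

lemma triList_length (k : ℕ) (a b : K) : (triList k a b).length = 3 * k := by
  induction k with
  | zero => simp [triList]
  | succ k ih => simp [triList, ih]; ring

lemma triList_reverse (N : ℕ) (a b : K) :
    a :: (triList N a b).reverse = triList N a b ++ [a] := by
  induction N with
  | zero => simp [triList]
  | succ N ih =>
      show a :: (a :: b :: b :: triList N a b).reverse = (a :: b :: b :: triList N a b) ++ [a]
      have h1 : (a :: b :: b :: triList N a b).reverse
          = (triList N a b).reverse ++ [b, b, a] := by simp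
      rw [h1]
      have h2 : a :: ((triList N a b).reverse ++ [b, b, a])
          = (a :: (triList N a b).reverse) ++ [b, b, a] := by simp
      rw [h2, ih]
      have h3 : triList N a b ++ [a] ++ [b, b, a] = triList N a b ++ (triList 1 a b ++ [a]) := by
        simp [triList]
      rw [h3, ← List.append_assoc]
      have h4 : triList N a b ++ triList 1 a b = triList (N + 1) a b := (triList_add N 1 a b).symm
      rw [h4]
      show triList (N + 1) a b ++ [a] = (a :: b :: b :: triList N a b) ++ [a]
      rfl

private lemma step_helper (U P e : K) (hU : U ≠ 0) (hP : P ≠ 0) :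
    !![e * P, e * U⁻¹ * (P⁻¹ - P); 0, e * P⁻¹] * !![U⁻¹, -1; 1, 0] * !![U⁻¹, -1; 1, 0]
        * !![U, -1; 1, 0] =
      !![(-e) * (P * U), (-e) * U⁻¹ * ((P * U)⁻¹ - P * U); 0, (-e) * (P * U)⁻¹] := by
  rw [Matrix.mul_fin_two, Matrix.mul_fin_two, Matrix.mul_fin_two]
  ext i j
  fin_cases i <;> fin_cases j <;>
    simp only [Matrix.cons_val', Matrix.cons_val_zero, Matrix.cons_val_one, Matrix.head_cons,
      Matrix.head_fin_const, Matrix.empty_val', Matrix.cons_val_fin_one]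
  all_goals (simp <;> field_simp <;> ring)

lemma mMat_triList (U : K) (hU : U ≠ 0) (l : ℕ) :
    mMat (triList l U U⁻¹) =
      !![(-1)^l * U^l, (-1)^l * U⁻¹ * ((U^l)⁻¹ - U^l); 0, (-1)^l * (U^l)⁻¹] := by
  induction l with
  | zero =>
      show (1 : Matrix (Fin 2) (Fin 2) K) = _
      rw [Matrix.one_fin_two]
      norm_num
  | succ l ih =>
      show mMat (U :: U⁻¹ :: U⁻¹ :: triList l U U⁻¹) = _
      rw [mMat_cons, mMat_cons, mMat_cons, ih]
      have h := step_helper U (U^l) ((-1 : K)^l) hU (pow_ne_zero _ hU)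
      rw [h, pow_succ U l, pow_succ (-1 : K) l]
      congr 1 <;> ring

lemma neg_one_fin_two : (-1 : Matrix (Fin 2) (Fin 2) K) = !![-1, 0; 0, -1] := by
  ext i j; fin_cases i <;> fin_cases j <;> simp [Matrix.one_apply]

lemma pow_two_mul_eq_one (U : K) (m : ℕ) (h : U ^ m = 1 ∨ U ^ m = -1) : U ^ (2 * m) = 1 := by
  have : U ^ (2 * m) = (U ^ m) ^ 2 := by rw [← pow_mul, mul_comm]
  rcases h with h | h <;> rw [this, h] <;> norm_num

lemma pow_eq_one_or_neg_one (U : K) (m : ℕ) (h : U ^ (2 * m) = 1) : U ^ m = 1 ∨ U ^ m = -1 := by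
  apply mul_self_eq_one_iff.mp
  rw [← pow_add]
  rw [show m + m = 2 * m by ring]
  exact h

lemma quiddity_triList_iff (U : K) (hU : U ≠ 0) (m : ℕ) :
    IsQuiddity (triList m U U⁻¹) ↔ U ^ (2 * m) = 1 := by
  have e1 : ((-1 : K) ^ m) ^ 2 = 1 := by
    rw [← pow_mul, mul_comm, pow_mul]; norm_num
  have e2 : U ^ (2 * m) = ((-1 : K) ^ m) ^ 2 * (U ^ m) ^ 2 := by
    rw [e1, one_mul, ← pow_mul, mul_comm]
  have hD := mMat_triList U hU m
  constructor
  · intro h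
    rcases h with h | h
    · have h00 := congrFun (congrFun (hD.symm.trans h) 0) 0
      simp [Matrix.one_apply] at h00
      rw [e2, ← mul_pow, h00]; norm_num
    · have h00 := congrFun (congrFun (hD.symm.trans h) 0) 0
      simp [Matrix.one_apply] at h00
      rw [e2, ← mul_pow, h00]; norm_num
  · intro h
    have h1 : U ^ m = 1 ∨ U ^ m = -1 := by
      apply mul_self_eq_one_iff.mp
      rw [← pow_add, show m + m = 2 * m by ring]
      exact h
    rcases h1 with h1 | h1 <;> rcases Nat.even_or_odd m with hm | hm
    · refine Or.inl ?_
      rw [hD, h1, hm.neg_one_pow]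
      ext i j; fin_cases i <;> fin_cases j <;> simp [Matrix.one_apply]
    · refine Or.inr ?_
      rw [hD, h1, hm.neg_one_pow]
      ext i j; fin_cases i <;> fin_cases j <;> simp [Matrix.one_apply]
    · refine Or.inr ?_
      rw [hD, h1, hm.neg_one_pow]
      ext i j; fin_cases i <;> fin_cases j <;> norm_num [Matrix.one_apply]
    · refine Or.inl ?_
      rw [hD, h1, hm.neg_one_pow]
      ext i j; fin_cases i <;> fin_cases j <;> norm_num [Matrix.one_apply]

lemma e1 (U : K) (hU : U ≠ 0) (l : ℕ) :
    (mMat (triList l U U⁻¹)) 0 0 = (-1)^l * U^l := by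
  have hD := mMat_triList U hU l
  have hPne : U ^ l ≠ 0 := pow_ne_zero _ hU
  try simp only [mMat_cons, mMat_append, mMat_nil, one_mul]
  rw [hD]
  try simp only [Matrix.mul_fin_two]
  try simp only [Matrix.of_apply, Matrix.cons_val', Matrix.cons_val_zero, Matrix.cons_val_one,
    Matrix.head_cons, Matrix.head_fin_const, Matrix.empty_val', Matrix.cons_val_fin_one]
  try simp only [pow_succ]
  try generalize hgen : U ^ l = P at hPne ⊢
  try field_simp
  try rw [div_eq_iff (by field_simp)]
  try ring
  try simp

lemma e2 (U : K) (hU : U ≠ 0) (l : ℕ) :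
    (mMat (triList l U U⁻¹ ++ [U])) 0 0 = (-1)^l * U^(l+1) := by
  have hD := mMat_triList U hU l
  have hPne : U ^ l ≠ 0 := pow_ne_zero _ hU
  try simp only [mMat_cons, mMat_append, mMat_nil, one_mul]
  rw [hD]
  try simp only [Matrix.mul_fin_two]
  try simp only [Matrix.of_apply, Matrix.cons_val', Matrix.cons_val_zero, Matrix.cons_val_one,
    Matrix.head_cons, Matrix.head_fin_const, Matrix.empty_val', Matrix.cons_val_fin_one]
  try simp only [pow_succ]
  try generalize hgen : U ^ l = P at hPne ⊢
  try field_simp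
  try rw [div_eq_iff (by field_simp)]
  try ring
  try simp

lemma e3 (U : K) (hU : U ≠ 0) (l : ℕ) :
    (mMat (triList l U U⁻¹ ++ [U, U⁻¹])) 0 0 = (0 : K) := by
  have hD := mMat_triList U hU l
  have hPne : U ^ l ≠ 0 := pow_ne_zero _ hU
  try simp only [mMat_cons, mMat_append, mMat_nil, one_mul]
  rw [hD]
  try simp only [Matrix.mul_fin_two]
  try simp only [Matrix.of_apply, Matrix.cons_val', Matrix.cons_val_zero, Matrix.cons_val_one,
    Matrix.head_cons, Matrix.head_fin_const, Matrix.empty_val', Matrix.cons_val_fin_one]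
  try simp only [pow_succ]
  try generalize hgen : U ^ l = P at hPne ⊢
  try field_simp
  try rw [div_eq_iff (by field_simp)]
  try ring
  try simp

lemma e4 (U : K) (hU : U ≠ 0) (l : ℕ) :
    (mMat (U⁻¹ :: triList l U U⁻¹)) 0 0 = (-1)^l * (U^(l+1))⁻¹ := by
  have hD := mMat_triList U hU l
  have hPne : U ^ l ≠ 0 := pow_ne_zero _ hU
  try simp only [mMat_cons, mMat_append, mMat_nil, one_mul]
  rw [hD]
  try simp only [Matrix.mul_fin_two]
  try simp only [Matrix.of_apply, Matrix.cons_val', Matrix.cons_val_zero, Matrix.cons_val_one,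
    Matrix.head_cons, Matrix.head_fin_const, Matrix.empty_val', Matrix.cons_val_fin_one]
  try simp only [pow_succ]
  try generalize hgen : U ^ l = P at hPne ⊢
  try field_simp
  try rw [div_eq_iff (by field_simp)]
  try ring
  try simp

lemma e5 (U : K) (hU : U ≠ 0) (l : ℕ) :
    (mMat (U⁻¹ :: (triList l U U⁻¹ ++ [U]))) 0 0 = (0 : K) := by
  have hD := mMat_triList U hU l
  have hPne : U ^ l ≠ 0 := pow_ne_zero _ hU
  try simp only [mMat_cons, mMat_append, mMat_nil, one_mul]
  rw [hD]
  try simp only [Matrix.mul_fin_two]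
  try simp only [Matrix.of_apply, Matrix.cons_val', Matrix.cons_val_zero, Matrix.cons_val_one,
    Matrix.head_cons, Matrix.head_fin_const, Matrix.empty_val', Matrix.cons_val_fin_one]
  try simp only [pow_succ]
  try generalize hgen : U ^ l = P at hPne ⊢
  try field_simp
  try rw [div_eq_iff (by field_simp)]
  try ring
  try simp

lemma e6 (U : K) (hU : U ≠ 0) (l : ℕ) :
    (mMat (U⁻¹ :: (triList l U U⁻¹ ++ [U, U⁻¹]))) 0 0 = (-1)^(l+1) * (U^(l+1))⁻¹ := by
  have hD := mMat_triList U hU l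
  have hPne : U ^ l ≠ 0 := pow_ne_zero _ hU
  try simp only [mMat_cons, mMat_append, mMat_nil, one_mul]
  rw [hD]
  try simp only [Matrix.mul_fin_two]
  try simp only [Matrix.of_apply, Matrix.cons_val', Matrix.cons_val_zero, Matrix.cons_val_one,
    Matrix.head_cons, Matrix.head_fin_const, Matrix.empty_val', Matrix.cons_val_fin_one]
  try simp only [pow_succ]
  try generalize hgen : U ^ l = P at hPne ⊢
  try field_simp
  try rw [div_eq_iff (by field_simp)]
  try ring
  try simp

lemma e7 (U : K) (hU : U ≠ 0) (l : ℕ) :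
    (mMat (U⁻¹ :: U⁻¹ :: triList l U U⁻¹)) 0 0 = (-1)^(l+1) * (U^l - (U^(l+2))⁻¹) := by
  have hD := mMat_triList U hU l
  have hPne : U ^ l ≠ 0 := pow_ne_zero _ hU
  try simp only [mMat_cons, mMat_append, mMat_nil, one_mul]
  rw [hD]
  try simp only [Matrix.mul_fin_two]
  try simp only [Matrix.of_apply, Matrix.cons_val', Matrix.cons_val_zero, Matrix.cons_val_one,
    Matrix.head_cons, Matrix.head_fin_const, Matrix.empty_val', Matrix.cons_val_fin_one]
  try simp only [pow_succ]
  try generalize hgen : U ^ l = P at hPne ⊢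
  try field_simp
  try rw [div_eq_iff (by field_simp)]
  try ring
  try simp

lemma e8 (U : K) (hU : U ≠ 0) (l : ℕ) :
    (mMat (U⁻¹ :: U⁻¹ :: (triList l U U⁻¹ ++ [U]))) 0 0 = (-1)^(l+1) * U^(l+1) := by
  have hD := mMat_triList U hU l
  have hPne : U ^ l ≠ 0 := pow_ne_zero _ hU
  try simp only [mMat_cons, mMat_append, mMat_nil, one_mul]
  rw [hD]
  try simp only [Matrix.mul_fin_two]
  try simp only [Matrix.of_apply, Matrix.cons_val', Matrix.cons_val_zero, Matrix.cons_val_one,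
    Matrix.head_cons, Matrix.head_fin_const, Matrix.empty_val', Matrix.cons_val_fin_one]
  try simp only [pow_succ]
  try generalize hgen : U ^ l = P at hPne ⊢
  try field_simp
  try rw [div_eq_iff (by field_simp)]
  try ring
  try simp

lemma e9 (U : K) (hU : U ≠ 0) (l : ℕ) :
    (mMat (U⁻¹ :: U⁻¹ :: (triList l U U⁻¹ ++ [U, U⁻¹]))) 0 0 = (-1)^(l+1) * (U^(l+2))⁻¹ := by
  have hD := mMat_triList U hU l
  have hPne : U ^ l ≠ 0 := pow_ne_zero _ hU
  try simp only [mMat_cons, mMat_append, mMat_nil, one_mul]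
  rw [hD]
  try simp only [Matrix.mul_fin_two]
  try simp only [Matrix.of_apply, Matrix.cons_val', Matrix.cons_val_zero, Matrix.cons_val_one,
    Matrix.head_cons, Matrix.head_fin_const, Matrix.empty_val', Matrix.cons_val_fin_one]
  try simp only [pow_succ]
  try generalize hgen : U ^ l = P at hPne ⊢
  try field_simp
  try rw [div_eq_iff (by field_simp)]
  try ring
  try simp


lemma suffix_triList {U V : K} {N : ℕ} {t : List K} (h : t <:+ triList N U V) :
    ∃ m, t = triList m U V ∨ t = V :: triList m U V ∨ t = V :: V :: triList m U V := by
  induction N with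
  | zero =>
      simp only [triList, List.suffix_nil] at h
      exact ⟨0, Or.inl (by simp [h, triList])⟩
  | succ N ih =>
      rw [show triList (N+1) U V = U :: V :: V :: triList N U V from rfl] at h
      rw [List.suffix_cons_iff] at h
      rcases h with h | h
      · exact ⟨N + 1, Or.inl h⟩
      rw [List.suffix_cons_iff] at h
      rcases h with h | h
      · exact ⟨N, Or.inr (Or.inr h)⟩
      rw [List.suffix_cons_iff] at h
      rcases h with h | h
      · exact ⟨N, Or.inr (Or.inl h)⟩
      · exact ih h

lemma prefix_triList {U V : K} {N : ℕ} {p : List K} (h : p <+: triList N U V) :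
    ∃ l, p = triList l U V ∨ p = triList l U V ++ [U] ∨ p = triList l U V ++ [U, V] := by
  induction N generalizing p with
  | zero =>
      simp only [triList, List.prefix_nil] at h
      exact ⟨0, Or.inl (by simp [h, triList])⟩
  | succ N ih =>
      rw [show triList (N+1) U V = U :: V :: V :: triList N U V from rfl] at h
      match p with
      | [] => exact ⟨0, Or.inl (by simp [triList])⟩
      | x :: p1 =>
          rw [List.cons_prefix_cons] at h
          obtain ⟨rfl, h⟩ := h
          match p1 with
          | [] => exact ⟨0, Or.inr (Or.inl (by simp [triList]))⟩
          | y :: p2 =>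
              rw [List.cons_prefix_cons] at h
              obtain ⟨rfl, h⟩ := h
              match p2 with
              | [] => exact ⟨0, Or.inr (Or.inr (by simp [triList]))⟩
              | z :: p3 =>
                  rw [List.cons_prefix_cons] at h
                  obtain ⟨rfl, h⟩ := h
                  obtain ⟨l, hl | hl | hl⟩ := ih h
                  · exact ⟨l + 1, Or.inl (by rw [hl]; rfl)⟩
                  · exact ⟨l + 1, Or.inr (Or.inl (by rw [hl]; rfl))⟩
                  · exact ⟨l + 1, Or.inr (Or.inr (by rw [hl]; rfl))⟩

lemma infix_form {U V : K} {N : ℕ} {s : List K} (h : s <:+: triList N U V) :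
    ∃ l, s = triList l U V ∨ s = triList l U V ++ [U] ∨ s = triList l U V ++ [U, V] ∨
      s = V :: triList l U V ∨ s = V :: (triList l U V ++ [U]) ∨
      s = V :: (triList l U V ++ [U, V]) ∨
      s = V :: V :: triList l U V ∨ s = V :: V :: (triList l U V ++ [U]) ∨
      s = V :: V :: (triList l U V ++ [U, V]) := by
  obtain ⟨t, hpre, hsuf⟩ := List.infix_iff_prefix_suffix.mp h
  obtain ⟨m, ht | ht | ht⟩ := suffix_triList hsuf
  · subst ht
    obtain ⟨l, h1 | h1 | h1⟩ := prefix_triList hpre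
    · exact ⟨l, Or.inl h1⟩
    · exact ⟨l, Or.inr (Or.inl h1)⟩
    · exact ⟨l, Or.inr (Or.inr (Or.inl h1))⟩
  · subst ht
    match s with
    | [] => exact ⟨0, Or.inl (by simp [triList])⟩
    | x :: s1 =>
        rw [List.cons_prefix_cons] at hpre
        obtain ⟨rfl, hpre⟩ := hpre
        obtain ⟨l, h1 | h1 | h1⟩ := prefix_triList hpre
        · exact ⟨l, Or.inr (Or.inr (Or.inr (Or.inl (by rw [h1]))))⟩
        · exact ⟨l, Or.inr (Or.inr (Or.inr (Or.inr (Or.inl (by rw [h1])))))⟩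
        · exact ⟨l, Or.inr (Or.inr (Or.inr (Or.inr (Or.inr (Or.inl (by rw [h1]))))))⟩
  · subst ht
    match s with
    | [] => exact ⟨0, Or.inl (by simp [triList])⟩
    | x :: s1 =>
        rw [List.cons_prefix_cons] at hpre
        obtain ⟨rfl, hpre⟩ := hpre
        match s1 with
        | [] => exact ⟨0, Or.inr (Or.inr (Or.inr (Or.inl (by simp [triList]))))⟩
        | y :: s2 =>
            rw [List.cons_prefix_cons] at hpre
            obtain ⟨rfl, hpre⟩ := hpre
            obtain ⟨l, h1 | h1 | h1⟩ := prefix_triList hpre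
            · exact ⟨l, Or.inr (Or.inr (Or.inr (Or.inr (Or.inr (Or.inr (Or.inl
                (by rw [h1])))))))⟩
            · exact ⟨l, Or.inr (Or.inr (Or.inr (Or.inr (Or.inr (Or.inr (Or.inr (Or.inl
                (by rw [h1]))))))))⟩
            · exact ⟨l, Or.inr (Or.inr (Or.inr (Or.inr (Or.inr (Or.inr (Or.inr (Or.inr
                (by rw [h1]))))))))⟩

lemma isRotated_infix {l l' : List K} (h : l.IsRotated l') : l' <:+: l ++ l := by
  obtain ⟨n, rfl⟩ := h
  rcases Nat.eq_zero_or_pos l.length with h0 | h0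
  · rw [List.length_eq_zero_iff] at h0
    subst h0
    simp
  · rw [← List.rotate_mod]
    rw [List.rotate_eq_drop_append_take (Nat.le_of_lt (Nat.mod_lt _ h0))]
    refine ⟨l.take (n % l.length), l.drop (n % l.length), ?_⟩
    have hgen : ∀ (a b : List K), a ++ (b ++ a) ++ b = (a ++ b) ++ (a ++ b) := by
      intro a b; simp [List.append_assoc]
    rw [hgen, List.take_append_drop]


lemma entry11 (x y : K) (s : List K) :
    (mMat (x :: (s ++ [y]))) 1 1 = -((mMat s) 0 0) := by
  rw [mMat_cons, mMat_append, mMat_singleton]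
  rw [Matrix.eta_fin_two (mMat s)]
  simp [Matrix.mul_apply, Fin.sum_univ_two]

lemma key_sign (U : K) (m : ℕ) (e : K) (he : e = 1 ∨ e = -1)
    (h : e * U ^ m = 1 ∨ e * U ^ m = -1) : U ^ (2 * m) = 1 := by
  apply pow_two_mul_eq_one
  rcases he with rfl | rfl
  · simpa using h
  · rcases h with h | h
    · right; linear_combination -h
    · left; linear_combination -h

lemma key_sign_inv (U : K) (hU : U ≠ 0) (m : ℕ) (e : K) (he : e = 1 ∨ e = -1)
    (h : e * (U ^ m)⁻¹ = 1 ∨ e * (U ^ m)⁻¹ = -1) : U ^ (2 * m) = 1 := by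
  have hm0 : U ^ m ≠ 0 := pow_ne_zero _ hU
  have hinv : (U ^ m)⁻¹ = 1 ∨ (U ^ m)⁻¹ = -1 := by
    rcases he with rfl | rfl
    · simpa using h
    · rcases h with h | h
      · right; linear_combination -h
      · left; linear_combination -h
  apply pow_two_mul_eq_one
  rcases hinv with h | h
  · left; rw [inv_eq_one] at h; exact h
  · right
    rw [inv_eq_iff_eq_inv] at h
    rw [h]
    norm_num

lemma neg_one_pow_cases (j : ℕ) : (-1 : K) ^ j = 1 ∨ (-1 : K) ^ j = -1 := by
  rcases Nat.even_or_odd j with hj | hj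
  · left; exact hj.neg_one_pow
  · right; exact hj.neg_one_pow

lemma reducible_imp_eq (U : K) (hU : U ≠ 0) (k : ℕ) (hk : 0 < k)
    (hmin : ∀ j, 0 < j → U ^ (2 * j) = 1 → k ≤ j)
    (hred : QuiddityReducible (triList k U U⁻¹)) :
    ∃ l, 1 ≤ l ∧ (U ^ (2 * l) + U ^ (l + 1) - 1 = 0 ∨ U ^ (2 * l) - U ^ (l + 1) - 1 = 0) := by
  obtain ⟨a, b, ha, hb, hqb, hequiv⟩ := hred
  obtain ⟨x, t, rfl⟩ : ∃ x t, b = x :: t := by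
    match b with
    | [] => simp at hb
    | x :: t => exact ⟨x, t, rfl⟩
  have ht : t ≠ [] := by
    intro h; subst h; simp at hb
  have htd : t = t.dropLast ++ [t.getLast ht] := (List.dropLast_append_getLast ht).symm
  set s : List K := t.dropLast with hs
  set y : K := t.getLast ht with hy
  -- the (0,0) entry of `mMat s` is `±1`
  have h11 := entry11 x y s
  rw [← htd] at h11
  have hp : (mMat s) 0 0 = 1 ∨ (mMat s) 0 0 = -1 := by
    rcases hqb with h | h
    · right
      have e := congrFun (congrFun h 1) 1
      rw [h11] at e
      simp only [Matrix.one_apply_eq] at e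
      linear_combination -e
    · left
      have e := congrFun (congrFun h 1) 1
      rw [h11] at e
      simp only [Matrix.neg_apply, Matrix.one_apply_eq] at e
      linear_combination -e
  -- `s` is a suffix of `oplus a (x :: t)`
  have hsuf : s <:+ oplus a (x :: t) := by
    refine ⟨(a.headD 0 + (x :: t).getLastD 0) :: (a.tail.dropLast ++ [a.getLastD 0 + x]), ?_⟩
    simp [oplus]
    exact hs
  -- length bookkeeping
  have hlen_ab : (oplus a (x :: t)).length = 3 * k := by
    have h1 : (triList k U U⁻¹).length = 3 * k := triList_length k U U⁻¹
    rcases hequiv with h | h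
    · rw [← h.perm.length_eq, h1]
    · rw [← h.perm.length_eq, List.length_reverse, h1]
  have hlen_s : s.length + 3 ≤ 3 * k ∧ 1 ≤ s.length := by
    have h2 : (oplus a (x :: t)).length
        = 1 + (a.tail.dropLast.length + (1 + (x :: t).tail.dropLast.length)) := by
      simp [oplus]
      omega
    have h3 : a.tail.dropLast.length = a.length - 2 := by simp; omega
    have h4 : (x :: t).tail.dropLast.length = t.length - 1 := by simp
    have h5 : s.length = t.length - 1 := by simp [hs]
    have h6 : 2 ≤ t.length := by
      have := hb; simp at this; omega
    constructor <;> omega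
  -- `s` is an infix of a long `triList`
  have hinf : s <:+: triList (k + k + 1) U U⁻¹ := by
    have hsub : s <:+: oplus a (x :: t) := hsuf.isInfix
    have hcc : triList k U U⁻¹ ++ triList k U U⁻¹ = triList (k + k) U U⁻¹ :=
      (triList_add k k U U⁻¹).symm
    have hpre1 : triList (k + k) U U⁻¹ <+: triList (k + k + 1) U U⁻¹ := by
      rw [triList_add (k + k) 1]
      exact ⟨triList 1 U U⁻¹, rfl⟩
    rcases hequiv with h | h
    · have h1 : oplus a (x :: t) <:+: triList k U U⁻¹ ++ triList k U U⁻¹ := isRotated_infix h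
      rw [hcc] at h1
      exact (hsub.trans h1).trans hpre1.isInfix
    · have h1 : oplus a (x :: t) <:+: (triList k U U⁻¹).reverse ++ (triList k U U⁻¹).reverse :=
        isRotated_infix h
      rw [← List.reverse_append, hcc] at h1
      have h2 : (triList (k + k) U U⁻¹).reverse <:+: triList (k + k + 1) U U⁻¹ := by
        have h3 : (triList (k + k) U U⁻¹).reverse <:+ U :: (triList (k + k) U U⁻¹).reverse :=
          List.suffix_cons _ _
        have h4 : U :: (triList (k + k) U U⁻¹).reverse = triList (k + k) U U⁻¹ ++ [U] :=
          triList_reverse (k + k) U U⁻¹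
        have h5 : triList (k + k) U U⁻¹ ++ [U] <+: triList (k + k + 1) U U⁻¹ := by
          rw [triList_add (k + k) 1]
          refine ⟨[U⁻¹, U⁻¹], ?_⟩
          rw [List.append_assoc]
          rfl
        rw [h4] at h3
        exact h3.isInfix.trans h5.isInfix
      exact (hsub.trans h1).trans h2
  -- classify the infix and conclude
  obtain ⟨l, hf⟩ := infix_form hinf
  have hsign := neg_one_pow_cases (K := K)
  have hlen1 := hlen_s.1
  have hlen2 := hlen_s.2
  rcases hf with hf | hf | hf | hf | hf | hf | hf | hf | hf
  · -- s = triList l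
    rw [hf, e1 U hU l] at hp
    have h2m := key_sign U l _ (hsign l) hp
    have hL : s.length = 3 * l := by rw [hf, triList_length]
    have : 0 < l := by omega
    have := hmin l this h2m
    omega
  · rw [hf, e2 U hU l] at hp
    have h2m := key_sign U (l + 1) _ (hsign l) hp
    have hL : s.length = 3 * l + 1 := by rw [hf]; simp [triList_length]
    have := hmin (l + 1) (by omega) h2m
    omega
  · rw [hf, e3 U hU l] at hp
    rcases hp with h | h
    · exact absurd h (by norm_num)
    · exact absurd h (by norm_num)
  · rw [hf, e4 U hU l] at hp
    have h2m := key_sign_inv U hU (l + 1) _ (hsign l) hp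
    have hL : s.length = 3 * l + 1 := by rw [hf]; simp [triList_length]
    have := hmin (l + 1) (by omega) h2m
    omega
  · rw [hf, e5 U hU l] at hp
    rcases hp with h | h
    · exact absurd h (by norm_num)
    · exact absurd h (by norm_num)
  · rw [hf, e6 U hU l] at hp
    have h2m := key_sign_inv U hU (l + 1) _ (hsign (l + 1)) hp
    have hL : s.length = 3 * l + 3 := by rw [hf]; simp [triList_length]
    have := hmin (l + 1) (by omega) h2m
    omega
  · -- the interesting case : s = U⁻¹ :: U⁻¹ :: triList l
    rw [hf, e7 U hU l] at hp
    refine ⟨l + 1, by omega, ?_⟩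
    have h2 : U ^ (2 * (l + 1)) = U ^ l * U ^ (l + 2) := by
      rw [← pow_add]; congr 1; omega
    have h3 : (U ^ (l + 2))⁻¹ * U ^ (l + 2) = 1 := inv_mul_cancel₀ (pow_ne_zero _ hU)
    have hX : U ^ l - (U ^ (l + 2))⁻¹ = 1 ∨ U ^ l - (U ^ (l + 2))⁻¹ = -1 := by
      rcases hsign (l + 1) with hs1 | hs1 <;> rw [hs1] at hp <;> rcases hp with h | h
      · left; linear_combination h
      · right; linear_combination h
      · right; linear_combination -h
      · left; linear_combination -h
    rcases hX with hX | hX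
    · right
      linear_combination h2 + U ^ (l + 2) * hX + h3
    · left
      linear_combination h2 + U ^ (l + 2) * hX + h3
  · rw [hf, e8 U hU l] at hp
    have h2m := key_sign U (l + 1) _ (hsign (l + 1)) hp
    have hL : s.length = 3 * l + 3 := by rw [hf]; simp [triList_length]
    have := hmin (l + 1) (by omega) h2m
    omega
  · rw [hf, e9 U hU l] at hp
    have h2m := key_sign_inv U hU (l + 2) _ (hsign (l + 1)) hp
    have hL : s.length = 3 * l + 4 := by rw [hf]; simp [triList_length]
    have := hmin (l + 2) (by omega) h2m
    omega


lemma quiddity_completion (p q r w : K) (hsq : p * p = 1) (hdet : p * w - q * r = 1) :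
    (!![p * r, -1; 1, 0] * !![p, q; r, w]) * !![-(p * q), -1; 1, 0]
      = (-p) • (1 : Matrix (Fin 2) (Fin 2) K) := by
  have hw : w = p * (q * r) + p := by linear_combination p * hdet - w * hsq
  subst hw
  rw [Matrix.mul_fin_two, Matrix.mul_fin_two]
  ext i j
  fin_cases i <;> fin_cases j <;>
    simp only [Matrix.smul_apply, Matrix.of_apply, Matrix.cons_val', Matrix.cons_val_zero,
      Matrix.cons_val_one, Matrix.head_cons, Matrix.head_fin_const, Matrix.empty_val',
      Matrix.cons_val_fin_one, Matrix.one_apply, smul_eq_mul, if_true, if_false] <;>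
    norm_num
  · linear_combination (-(p * q * r)) * hsq
  · linear_combination (-r) * hsq
  · linear_combination (-q) * hsq

lemma eq_imp_reducible (U : K) (hU : U ≠ 0) (k l : ℕ) (hrk : l + 2 ≤ k)
    (heq : U ^ (2 * (l + 1)) + U ^ (l + 2) - 1 = 0 ∨ U ^ (2 * (l + 1)) - U ^ (l + 2) - 1 = 0) :
    QuiddityReducible (triList k U U⁻¹) := by
  set s : List K := U⁻¹ :: U⁻¹ :: triList l U U⁻¹ with hsdef
  -- the (0,0) entry of `mMat s` squares to one
  have h2 : U ^ (2 * (l + 1)) = U ^ l * U ^ (l + 2) := by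
    rw [← pow_add]; congr 1; omega
  have h3 : (U ^ (l + 2))⁻¹ * U ^ (l + 2) = 1 := inv_mul_cancel₀ (pow_ne_zero _ hU)
  have hX : U ^ l - (U ^ (l + 2))⁻¹ = -1 ∨ U ^ l - (U ^ (l + 2))⁻¹ = 1 := by
    rcases heq with heq | heq
    · left
      have hc : (U ^ l - (U ^ (l + 2))⁻¹) * U ^ (l + 2) = (-1) * U ^ (l + 2) := by
        linear_combination heq - h2 - h3
      exact mul_right_cancel₀ (pow_ne_zero _ hU) hc
    · right
      have hc : (U ^ l - (U ^ (l + 2))⁻¹) * U ^ (l + 2) = 1 * U ^ (l + 2) := by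
        linear_combination heq - h2 - h3
      exact mul_right_cancel₀ (pow_ne_zero _ hU) hc
  have hsq : (mMat s) 0 0 * (mMat s) 0 0 = 1 := by
    rw [hsdef, e7 U hU l]
    rcases neg_one_pow_cases (K := K) (l + 1) with h | h <;> rw [h] <;>
      rcases hX with hX | hX <;> rw [hX] <;> norm_num
  set p : K := (mMat s) 0 0 with hpdef
  set q : K := (mMat s) 0 1 with hqdef
  set r : K := (mMat s) 1 0 with hrdef
  set w : K := (mMat s) 1 1 with hwdef
  have hdet : p * w - q * r = 1 := by
    have hd := det_mMat s
    rw [Matrix.det_fin_two] at hd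
    exact hd
  have hS : mMat s = !![p, q; r, w] := Matrix.eta_fin_two (mMat s)
  -- the summand quiddity b
  set b : List K := (-(p * q)) :: (s ++ [p * r]) with hbdef
  have hmb : mMat b = (-p) • (1 : Matrix (Fin 2) (Fin 2) K) := by
    rw [hbdef, mMat_cons, mMat_append, mMat_singleton, hS]
    exact quiddity_completion p q r w hsq hdet
  have hquidb : IsQuiddity b := by
    rcases mul_self_eq_one_iff.mp hsq with hp1 | hp1
    · right; rw [hmb, hp1]; simp
    · left; rw [hmb, hp1]; simp
  -- the complementary tuple a
  obtain ⟨m, rfl⟩ : ∃ m, k = (m + 1) + (l + 1) := ⟨k - l - 2, by omega⟩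
  set a : List K :=
    (U - p * r) :: ((U⁻¹ :: U⁻¹ :: triList m U U⁻¹) ++ [U - (-(p * q))]) with hadef
  refine ⟨a, b, ?_, ?_, hquidb, ?_⟩
  · rw [hadef]; simp
  · rw [hbdef, hsdef]; simp
  · left
    have hoplus : oplus a b = triList ((m + 1) + (l + 1)) U U⁻¹ := by
      rw [triList_add]
      show oplus a b
        = (U :: U⁻¹ :: U⁻¹ :: triList m U U⁻¹) ++ (U :: U⁻¹ :: U⁻¹ :: triList l U U⁻¹)
      rw [hadef, hbdef, oplus]
      simp only [List.headD_cons, List.getLastD_cons, List.getLastD_concat, List.tail_cons,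
        List.dropLast_concat]
      have e1' : U - p * r + p * r = U := by ring
      have e2' : U - -(p * q) + -(p * q) = U := by ring
      rw [e1', e2']
      simp [hsdef]
    rw [hoplus]

end Aux

/-- for `u ≠ ±1`, the `u`-trinomial minimal solution is irreducible iff `u`
is not a root of `X^{2l} ± X^{l+1} − 1` for any `l ≥ 1`. -/
theorem stmt14 (K : Type*) [Field K] [Fintype K] (u : Kˣ)
    (hu1 : (u : K) ≠ 1) (hu2 : (u : K) ≠ -1) (k : ℕ) (hk : 0 < k)
    (hq : IsQuiddity (triList k (u : K) ((u⁻¹ : Kˣ) : K)))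
    (hmin : ∀ j, 0 < j → IsQuiddity (triList j (u : K) ((u⁻¹ : Kˣ) : K)) → k ≤ j) :
    ¬ QuiddityReducible (triList k (u : K) ((u⁻¹ : Kˣ) : K)) ↔
      ∀ l : ℕ, 1 ≤ l →
        (u : K) ^ (2 * l) + (u : K) ^ (l + 1) - 1 ≠ 0 ∧
        (u : K) ^ (2 * l) - (u : K) ^ (l + 1) - 1 ≠ 0 := by
  have hUne : (u : K) ≠ 0 := Units.ne_zero u
  have hV : ((u⁻¹ : Kˣ) : K) = ((u : K))⁻¹ := Units.val_inv_eq_inv_val u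
  rw [hV] at hq hmin ⊢
  set U : K := (u : K) with hUdef
  have hmin' : ∀ j, 0 < j → U ^ (2 * j) = 1 → k ≤ j := by
    intro j hj hU2
    exact hmin j hj ((quiddity_triList_iff U hUne j).mpr hU2)
  have hq' : U ^ (2 * k) = 1 := (quiddity_triList_iff U hUne k).mp hq
  have hUk : U ^ k = 1 ∨ U ^ k = -1 := by
    apply mul_self_eq_one_iff.mp
    rw [← pow_add, show k + k = 2 * k by ring]
    exact hq'
  have main : ∀ d : K, (d = 1 ∨ d = -1) → ∀ l : ℕ, 1 ≤ l →
      U ^ (2 * l) + d * U ^ (l + 1) - 1 = 0 → QuiddityReducible (triList k U U⁻¹) := by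
    intro d hd l hl hzero
    set R := l % k with hR
    set Q := l / k with hQ
    have hRk : R < k := Nat.mod_lt _ hk
    have hlk : l = k * Q + R := (Nat.div_add_mod l k).symm
    have h2l : U ^ (2 * l) = U ^ (2 * R) := by
      have hexp : 2 * l = 2 * k * Q + 2 * R := by rw [hlk]; ring
      rw [hexp, pow_add, pow_mul, hq', one_pow, one_mul]
    obtain ⟨e, he1, he2⟩ : ∃ e : K, (e = 1 ∨ e = -1) ∧ U ^ (l + 1) = e * U ^ (R + 1) := by
      refine ⟨(U ^ k) ^ Q, ?_, ?_⟩
      · rcases hUk with h | h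
        · left; rw [h, one_pow]
        · rw [h]; exact neg_one_pow_cases Q
      · have hexp2 : l + 1 = k * Q + (R + 1) := by omega
        rw [hexp2, pow_add, pow_mul]
    have hz2 : U ^ (2 * R) + (d * e) * U ^ (R + 1) - 1 = 0 := by
      rw [h2l, he2] at hzero
      linear_combination hzero
    have hde : d * e = 1 ∨ d * e = -1 := by
      rcases hd with rfl | rfl <;> rcases he1 with rfl | rfl <;> norm_num
    have hR1 : 1 ≤ R := by
      by_contra hcon
      have hR0 : R = 0 := by omega
      rw [hR0] at hz2
      have hU0 : (d * e) * U = 0 := by linear_combination hz2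
      rcases hde with h | h <;> rw [h] at hU0 <;> simp at hU0 <;> exact hUne hU0
    obtain ⟨l2, hl2⟩ : ∃ l2, R = l2 + 1 := ⟨R - 1, by omega⟩
    rw [hl2] at hz2
    rcases hde with h | h <;> rw [h] at hz2
    · exact eq_imp_reducible U hUne k l2 (by omega) (Or.inl (by linear_combination hz2))
    · exact eq_imp_reducible U hUne k l2 (by omega) (Or.inr (by linear_combination hz2))
  constructor
  · intro hnred l hl
    constructor
    · intro hzero
      exact hnred (main 1 (Or.inl rfl) l hl (by linear_combination hzero))
    · intro hzero
      exact hnred (main (-1) (Or.inr rfl) l hl (by linear_combination hzero))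
  · intro hall hred
    obtain ⟨l, hl, heq⟩ := reducible_imp_eq U hUne k hk hmin' hred
    rcases heq with h | h
    · exact (hall l hl).1 h
    · exact (hall l hl).2 h
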